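/- For every real u with |u| < 1/√β_t, the rescaled function Â(u) := A(u/√τ, τ) satisfies, as τ → 0+, Â(u) = u²κθτ/4 + O(τ^{3/2}). -/

import Mathlib

open Filter Topology Asymptotics MeasureTheory

set_option linter.unusedVariables false

noncomputable section


/-- sign convention of the paper: 1 if `0 ≤ x`, -1 otherwise. -/
def sgn' (x : ℝ) : ℝ := if 0 ≤ x then 1 else -1

/-- principal-branch complex square root `d` of the Heston Riccati discriminant. -/
def hestD (κ ρ ξ : ℝ) (w : ℂ) : ℂ :=
  (((κ : ℂ) - (ρ : ℂ) * (ξ : ℂ) * w) ^ 2 + w * (1 - w) * (ξ : ℂ) ^ 2) ^ ((1 : ℂ) / 2)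

def hestGamma (κ ρ ξ : ℝ) (w : ℂ) : ℂ :=
  ((κ : ℂ) - (ρ : ℂ) * (ξ : ℂ) * w - hestD κ ρ ξ w) /
    ((κ : ℂ) - (ρ : ℂ) * (ξ : ℂ) * w + hestD κ ρ ξ w)

def hestB (κ ρ ξ : ℝ) (w : ℂ) (τ : ℝ) : ℂ :=
  (((κ : ℂ) - (ρ : ℂ) * (ξ : ℂ) * w - hestD κ ρ ξ w) / (ξ : ℂ) ^ 2) *
    ((1 - Complex.exp (-(hestD κ ρ ξ w) * (τ : ℂ))) /
      (1 - hestGamma κ ρ ξ w * Complex.exp (-(hestD κ ρ ξ w) * (τ : ℂ))))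

def hestA (κ θ ρ ξ : ℝ) (w : ℂ) (τ : ℝ) : ℂ :=
  ((κ * θ / ξ ^ 2 : ℝ) : ℂ) *
    (((κ : ℂ) - (ρ : ℂ) * (ξ : ℂ) * w - hestD κ ρ ξ w) * (τ : ℂ) -
      2 * Complex.log ((1 - hestGamma κ ρ ξ w * Complex.exp (-(hestD κ ρ ξ w) * (τ : ℂ))) /
        (1 - hestGamma κ ρ ξ w)))

def betaT (κ ξ t : ℝ) : ℝ := ξ ^ 2 * (1 - Real.exp (-(κ * t))) / (4 * κ)

/-- explicit Heston forward log-mgf `G_τ(w)`. -/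
def hestG (κ θ ξ v ρ t : ℝ) (w : ℂ) (τ : ℝ) : ℂ :=
  hestA κ θ ρ ξ w τ +
    hestB κ ρ ξ w τ * (v : ℂ) * ((Real.exp (-(κ * t)) : ℝ) : ℂ) /
      (1 - 2 * (betaT κ ξ t : ℂ) * hestB κ ρ ξ w τ) -
    ((2 * κ * θ / ξ ^ 2 : ℝ) : ℂ) *
      Complex.log (1 - 2 * (betaT κ ξ t : ℂ) * hestB κ ρ ξ w τ)

/-- rescaled forward log-mgf, for complex argument. -/
def hestLambdaC (κ θ ξ v ρ t τ : ℝ) (z : ℂ) : ℂ :=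
  ((Real.sqrt τ : ℝ) : ℂ) * hestG κ θ ξ v ρ t (z / ((Real.sqrt τ : ℝ) : ℂ)) τ

/-- rescaled forward log-mgf `Λ_τ(u) = √τ · G_τ(u/√τ)`. -/
def hestLambda (κ θ ξ v ρ t τ : ℝ) (u : ℝ) : ℂ :=
  hestLambdaC κ θ ξ v ρ t τ (u : ℂ)

/-- `D_{t,τ}`: the maximal open interval containing `0` on which `Λ_τ` is real-valued. -/
def hestDom (κ θ ξ v ρ t τ : ℝ) : Set ℝ :=
  connectedComponentIn (interior {u : ℝ | (hestLambda κ θ ξ v ρ t τ u).im = 0}) 0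


-- auxiliary lemmas
lemma cpow_half_ofReal_neg {r : ℝ} (hr : r < 0) :
    (r:ℂ) ^ ((1:ℂ)/2) = ((Real.sqrt (-r) : ℝ):ℂ) * Complex.I := by
  rw [Complex.ofReal_cpow_of_nonpos hr.le]
  have h2 : Complex.exp (↑Real.pi * Complex.I * ((1:ℂ)/2)) = Complex.I := by
    rw [show (↑Real.pi * Complex.I * ((1:ℂ)/2)) = ((Real.pi/2 : ℝ):ℂ) * Complex.I by
      push_cast; ring, Complex.exp_mul_I, ← Complex.ofReal_cos, ← Complex.ofReal_sin,
      Real.cos_pi_div_two, Real.sin_pi_div_two]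
    simp
  have h1 : (-(r:ℂ)) ^ ((1:ℂ)/2) = ((Real.sqrt (-r) : ℝ):ℂ) := by
    have h3 := Complex.ofReal_cpow (x := -r) (by linarith) (1/2 : ℝ)
    rw [← Real.sqrt_eq_rpow] at h3
    push_cast at h3
    exact h3.symm
  rw [h1, h2]

lemma expKey0 (Q S E F J : ℂ) (hEF : E * F = 1) (hJ : J^2 = -1) :
    (Q*S + J*S) - (Q*S - J*S)*(F*F) = 2*J*S*((E + F)/2 + Q*((F - E)*J/2))*F := by
  linear_combination (Q*S*E*F - Q*S*F^2) * hJ + (-(J*S) - Q*S) * hEF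

lemma expKey (P S : ℂ) (hS : S ≠ 0) :
    (P + Complex.I*S) - (P - Complex.I*S) * Complex.exp (-(Complex.I*S))
      = 2*Complex.I*S*(Complex.cos (S/2) + (P/S)*Complex.sin (S/2)) *
          Complex.exp (-(Complex.I*(S/2))) := by
  have hE : Complex.exp (S/2*Complex.I) * Complex.exp (-(S/2)*Complex.I) = 1 := by
    rw [← Complex.exp_add, show S/2*Complex.I + -(S/2)*Complex.I = 0 by ring, Complex.exp_zero]
  have h0 := expKey0 (P/S) S (Complex.exp (S/2*Complex.I)) (Complex.exp (-(S/2)*Complex.I))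
    Complex.I hE Complex.I_sq
  rw [div_mul_cancel₀ _ hS] at h0
  simp only [Complex.cos, Complex.sin]
  rw [show -(Complex.I*S) = -(S/2)*Complex.I + -(S/2)*Complex.I by ring, Complex.exp_add,
      show -(Complex.I*(S/2)) = -(S/2)*Complex.I by ring]
  exact h0

/-- `p(x)` -/
def pFun (κ ξ ρ u x : ℝ) : ℝ := x * (κ * x - ρ * ξ * u)
/-- `σ²(x)` -/
def sgFun (κ ξ ρ u x : ℝ) : ℝ :=
  (1 - ρ^2) * ξ^2 * u^2 - (ξ^2 - 2*κ*ρ*ξ) * u * x - κ^2 * x^2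
/-- `s(x)` -/
def sFun (κ ξ ρ u x : ℝ) : ℝ := x * Real.sqrt (sgFun κ ξ ρ u x)
/-- `M(x)` -/
def mFun (κ ξ ρ u x : ℝ) : ℝ :=
  Real.cos (sFun κ ξ ρ u x / 2) +
    (pFun κ ξ ρ u x / sFun κ ξ ρ u x) * Real.sin (sFun κ ξ ρ u x / 2)

lemma hestD_eq (κ ξ ρ u : ℝ) {x : ℝ} (hx : 0 < x) (hsg : 0 < sgFun κ ξ ρ u x) :
    hestD κ ρ ξ ((u:ℂ)/(x:ℂ)) = ((Real.sqrt (sgFun κ ξ ρ u x) / x : ℝ):ℂ) * Complex.I := by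
  have hxC : (x:ℂ) ≠ 0 := by exact_mod_cast hx.ne'
  have hb : ((κ:ℂ) - (ρ:ℂ)*(ξ:ℂ)*((u:ℂ)/(x:ℂ)))^2 + ((u:ℂ)/(x:ℂ))*(1 - (u:ℂ)/(x:ℂ))*(ξ:ℂ)^2
      = ((-(sgFun κ ξ ρ u x) / x^2 : ℝ):ℂ) := by
    simp only [sgFun]; push_cast; field_simp; ring
  have hneg : -(sgFun κ ξ ρ u x) / x^2 < 0 :=
    div_neg_of_neg_of_pos (neg_neg_iff_pos.mpr hsg) (by positivity)
  rw [hestD, hb, cpow_half_ofReal_neg hneg]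
  congr 2
  rw [show -(-sgFun κ ξ ρ u x / x ^ 2) = sgFun κ ξ ρ u x / x^2 by ring,
      Real.sqrt_div hsg.le, Real.sqrt_sq hx.le]

lemma hestA_eq (κ θ ξ ρ u : ℝ) {x : ℝ} (hx : 0 < x)
    (hsg : 0 < sgFun κ ξ ρ u x) (hslt : sFun κ ξ ρ u x < Real.pi)
    (hM : 0 < mFun κ ξ ρ u x) :
    hestA κ θ ρ ξ ((u:ℂ)/(x:ℂ)) (x^2)
      = ((κ*θ/ξ^2 * (pFun κ ξ ρ u x - 2 * Real.log (mFun κ ξ ρ u x)) : ℝ) : ℂ) := by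
  have hσ : 0 < Real.sqrt (sgFun κ ξ ρ u x) := Real.sqrt_pos.2 hsg
  have hs : 0 < sFun κ ξ ρ u x := mul_pos hx hσ
  have hxC : (x:ℂ) ≠ 0 := by exact_mod_cast hx.ne'
  have hsC : ((sFun κ ξ ρ u x : ℝ):ℂ) ≠ 0 := by exact_mod_cast hs.ne'
  have hD := hestD_eq κ ξ ρ u hx hsg
  set p := pFun κ ξ ρ u x with hpdef
  set s := sFun κ ξ ρ u x with hsdef
  set M := mFun κ ξ ρ u x with hMdef
  have hps : ((p:ℝ):ℂ) + Complex.I*((s:ℝ):ℂ) ≠ 0 := by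
    intro h
    have := congrArg Complex.im h
    simp at this
    exact hs.ne' this
  have hcd : ((κ:ℂ) - (ρ:ℂ)*(ξ:ℂ)*((u:ℂ)/(x:ℂ)) - hestD κ ρ ξ ((u:ℂ)/(x:ℂ))) * ((x^2 : ℝ):ℂ)
      = ((p:ℝ):ℂ) - Complex.I*((s:ℝ):ℂ) := by
    rw [hD, hpdef, hsdef]; simp only [pFun, sFun]; push_cast; field_simp
  have hcd2 : ((κ:ℂ) - (ρ:ℂ)*(ξ:ℂ)*((u:ℂ)/(x:ℂ)) + hestD κ ρ ξ ((u:ℂ)/(x:ℂ))) * ((x^2 : ℝ):ℂ)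
      = ((p:ℝ):ℂ) + Complex.I*((s:ℝ):ℂ) := by
    rw [hD, hpdef, hsdef]; simp only [pFun, sFun]; push_cast; field_simp
  have hX : ((x^2 : ℝ):ℂ) ≠ 0 := by
    simpa using pow_ne_zero 2 hxC
  have hγ : hestGamma κ ρ ξ ((u:ℂ)/(x:ℂ))
      = (((p:ℝ):ℂ) - Complex.I*((s:ℝ):ℂ)) / (((p:ℝ):ℂ) + Complex.I*((s:ℝ):ℂ)) := by
    rw [hestGamma, ← hcd, ← hcd2, mul_div_mul_right _ _ hX]
  have hexp : -(hestD κ ρ ξ ((u:ℂ)/(x:ℂ))) * ((x^2 : ℝ):ℂ) = -(Complex.I*((s:ℝ):ℂ)) := by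
    rw [hD, hsdef]; simp only [sFun]; push_cast; field_simp
  have hMC : ((M:ℝ):ℂ) = Complex.cos (((s:ℝ):ℂ)/2)
      + (((p:ℝ):ℂ)/((s:ℝ):ℂ))*Complex.sin (((s:ℝ):ℂ)/2) := by
    rw [hMdef]; simp only [mFun, ← hsdef, ← hpdef]
    push_cast [Complex.ofReal_cos, Complex.ofReal_sin]
    ring
  have hMexp : ((M:ℝ):ℂ) = Complex.exp ((Real.log M : ℝ):ℂ) := by
    rw [← Complex.ofReal_exp, Real.exp_log hM]
  have hkey := expKey (((p:ℝ):ℂ)) (((s:ℝ):ℂ)) hsC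
  rw [← hMC] at hkey
  have h2Is : (2*Complex.I*((s:ℝ):ℂ)) ≠ 0 := by
    simp [Complex.I_ne_zero, hsC]
  have hratio : (1 - hestGamma κ ρ ξ ((u:ℂ)/(x:ℂ)) *
        Complex.exp (-(hestD κ ρ ξ ((u:ℂ)/(x:ℂ))) * ((x^2 : ℝ):ℂ))) /
        (1 - hestGamma κ ρ ξ ((u:ℂ)/(x:ℂ)))
      = Complex.exp (((Real.log M : ℝ):ℂ) - Complex.I*((s:ℝ):ℂ)/2) := by
    rw [hγ, hexp]
    have h1γ : (1:ℂ) - (((p:ℝ):ℂ) - Complex.I*((s:ℝ):ℂ)) / (((p:ℝ):ℂ) + Complex.I*((s:ℝ):ℂ))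
        = 2*Complex.I*((s:ℝ):ℂ) / (((p:ℝ):ℂ) + Complex.I*((s:ℝ):ℂ)) := by
      field_simp; ring
    have h2γ : (1:ℂ) - (((p:ℝ):ℂ) - Complex.I*((s:ℝ):ℂ)) / (((p:ℝ):ℂ) + Complex.I*((s:ℝ):ℂ))
          * Complex.exp (-(Complex.I*((s:ℝ):ℂ)))
        = ((((p:ℝ):ℂ) + Complex.I*((s:ℝ):ℂ)) - (((p:ℝ):ℂ) - Complex.I*((s:ℝ):ℂ))
            * Complex.exp (-(Complex.I*((s:ℝ):ℂ)))) / (((p:ℝ):ℂ) + Complex.I*((s:ℝ):ℂ)) := by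
      field_simp
    rw [h1γ, h2γ, div_div_div_comm, div_self hps, div_one, hkey]
    rw [div_eq_iff h2Is, hMexp, mul_assoc, ← Complex.exp_add,
      show ((Real.log M : ℝ):ℂ) + -(Complex.I*(((s:ℝ):ℂ)/2))
          = ((Real.log M : ℝ):ℂ) - Complex.I*((s:ℝ):ℂ)/2 by ring]
    ring
  have him : (((Real.log M : ℝ):ℂ) - Complex.I*((s:ℝ):ℂ)/2).im = -(s/2) := by
    simp
  have hlog : Complex.log (Complex.exp (((Real.log M : ℝ):ℂ) - Complex.I*((s:ℝ):ℂ)/2))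
      = ((Real.log M : ℝ):ℂ) - Complex.I*((s:ℝ):ℂ)/2 := by
    apply Complex.log_exp <;> rw [him]
    · have := Real.pi_pos; linarith
    · have := Real.pi_pos; linarith
  rw [hestA, hcd, hratio, hlog]
  push_cast
  ring


set_option maxHeartbeats 1000000 in
lemma pointBound (κ θ ξ ρ u x σh σl Np : ℝ)
    (hκθ : 0 ≤ κ*θ/ξ^2) (hξ0 : ξ ≠ 0)
    (hx : 0 < x) (hx1 : x ≤ 1)
    (hsg : 0 < sgFun κ ξ ρ u x)
    (hσh : Real.sqrt (sgFun κ ξ ρ u x) ≤ σh)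
    (hσl0 : 0 < σl) (hσl : σl ≤ Real.sqrt (sgFun κ ξ ρ u x))
    (hxσ : σh * x ≤ 1)
    (hNp : 0 ≤ Np) (hNpb : |κ*x - ρ*ξ*u| ≤ Np)
    (hxCy : ((σh/2)^2 + 2*(Np/σl)*(σh/2)) * x ≤ 1/2) :
    ‖hestA κ θ ρ ξ ((u:ℂ)/(x:ℂ)) (x^2) - ((u^2*κ*θ*x^2/4 : ℝ):ℂ)‖
      ≤ (κ*θ/ξ^2) * (|ξ^2*u/4| + 2*(σh/2)^3 + 2*(Np/σl)*(σh/2)^3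
          + ((σh/2)^2/2 + (σh/2)^3 + (Np/σl)*(σh/2)^3)
              * ((σh/2)^2 + 2*(Np/σl)*(σh/2) + Np/2)
          + 4*((σh/2)^2 + 2*(Np/σl)*(σh/2))^3) * (x^3) := by
  have hσpos : 0 < Real.sqrt (sgFun κ ξ ρ u x) := Real.sqrt_pos.2 hsg
  set σ := Real.sqrt (sgFun κ ξ ρ u x) with hσdef
  have hσ2 : σ^2 = sgFun κ ξ ρ u x := Real.sq_sqrt hsg.le
  have hs_eq : sFun κ ξ ρ u x = x*σ := rfl
  have hp_eq : pFun κ ξ ρ u x = x*(κ*x - ρ*ξ*u) := rfl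
  have hσ2' : σ^2 = (1-ρ^2)*ξ^2*u^2 - (ξ^2 - 2*κ*ρ*ξ)*u*x - κ^2*x^2 := hσ2
  clear_value σ
  have hσh0 : 0 < σh := lt_of_lt_of_le hσpos hσh
  set t := x*σ/2 with htdef
  set q := (κ*x - ρ*ξ*u)/σ with hqdef
  have hqσ : q*σ = κ*x - ρ*ξ*u := by rw [hqdef]; field_simp
  have hq_eq : pFun κ ξ ρ u x / sFun κ ξ ρ u x = q := by
    rw [hp_eq, hs_eq, hqdef, mul_div_mul_left _ _ hx.ne']
  have hM_eq : mFun κ ξ ρ u x = 1 + ((Real.cos t - 1) + q * Real.sin t) := by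
    unfold mFun
    rw [hq_eq, hs_eq, ← htdef]
    ring
  clear_value t q
  set y := (Real.cos t - 1) + q*Real.sin t with hydef
  set rc := Real.cos t - (1 - t^2/2) with hrcdef
  set rs := Real.sin t - t with hrsdef
  clear_value y rc rs
  -- basic bounds on t
  have ht0 : 0 ≤ t := by rw [htdef]; positivity
  have htx : t ≤ (σh/2)*x := by
    rw [htdef]
    have h := mul_le_mul_of_nonneg_left hσh hx.le
    linarith only [h]
  have ht1 : t ≤ 1/2 := by linarith only [htx, hxσ]
  have habs_t : |t| = t := abs_of_nonneg ht0
  have ht4 : t^4 ≤ t^3 := pow_le_pow_of_le_one ht0 (by linarith only [ht1]) (by norm_num)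
  have ht3 : t^3 ≤ t^2 := pow_le_pow_of_le_one ht0 (by linarith only [ht1]) (by norm_num)
  have ht31 : t^3 ≤ t := by
    have h := pow_le_pow_of_le_one ht0 (by linarith only [ht1] : t ≤ 1) (by norm_num : 1 ≤ 3)
    simpa using h
  have ht40 : 0 ≤ t^4 := pow_nonneg ht0 4
  have hcb := Real.cos_bound (x := t) (by rw [habs_t]; linarith only [ht1])
  have hsb := Real.sin_bound (x := t) (by rw [habs_t]; linarith only [ht1])
  rw [habs_t] at hcb hsb
  have hrc : |rc| ≤ t^3 := by
    rw [hrcdef]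
    calc |Real.cos t - (1 - t^2/2)| ≤ t^4*(5/96) := hcb
      _ ≤ t^3 := by linarith only [ht4, ht40]
  have hrs : |rs| ≤ t^3 := by
    rw [hrsdef, show Real.sin t - t = (Real.sin t - (t - t^3/6)) + (-(t^3/6)) by ring]
    calc |(Real.sin t - (t - t^3/6)) + (-(t^3/6))|
        ≤ |Real.sin t - (t - t^3/6)| + |(-(t^3/6))| := abs_add_le _ _
      _ ≤ t^4*(5/96) + t^3/6 := by
          gcongr
          · have h5 : t^5 ≤ t^4 := pow_le_pow_of_le_one ht0 (by linarith only [ht1]) (by norm_num)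
            linarith only [hsb, h5, ht40]
          rw [abs_neg, abs_of_nonneg (by positivity)]
      _ ≤ t^3 := by linarith only [ht4, ht40]
  have hcos1 : |Real.cos t - 1| ≤ t^2 := by
    rw [show Real.cos t - 1 = (Real.cos t - (1 - t^2/2)) + (-(t^2/2)) by ring]
    calc |(Real.cos t - (1 - t^2/2)) + (-(t^2/2))|
        ≤ |Real.cos t - (1 - t^2/2)| + |(-(t^2/2))| := abs_add_le _ _
      _ ≤ t^4*(5/96) + t^2/2 := by
          gcongr
          rw [abs_neg, abs_of_nonneg (by positivity)]
      _ ≤ t^2 := by linarith only [ht4, ht3, ht40]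
  have hsin : |Real.sin t| ≤ 2*t := by
    rw [show Real.sin t = (Real.sin t - t) + t by ring]
    calc |(Real.sin t - t) + t| ≤ |Real.sin t - t| + |t| := abs_add_le _ _
      _ ≤ t^3 + t := by rw [habs_t]; gcongr; rw [← hrsdef]; exact hrs
      _ ≤ 2*t := by linarith only [ht31]
  have hqb : |q| ≤ Np/σl := by
    rw [hqdef, abs_div, abs_of_pos hσpos]
    exact div_le_div₀ hNp hNpb hσl0 hσl
  have hqabs : 0 ≤ Np/σl := div_nonneg hNp hσl0.le
  have hxx : x^2 ≤ x := by
    have h := mul_le_mul_of_nonneg_left hx1 hx.le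
    linarith only [h]
  have hx32 : x^3 ≤ x^2 := pow_le_pow_of_le_one hx.le hx1 (by norm_num)
  -- bound on y
  have hyb : |y| ≤ ((σh/2)^2 + 2*(Np/σl)*(σh/2))*x := by
    rw [hydef]
    calc |(Real.cos t - 1) + q*Real.sin t| ≤ |Real.cos t - 1| + |q| * |Real.sin t| := by
          rw [← abs_mul]; exact abs_add_le _ _
      _ ≤ t^2 + (Np/σl)*(2*t) := by
          gcongr <;> first
            | exact hcos1
            | exact mul_le_mul hqb hsin (abs_nonneg _) hqabs
      _ ≤ ((σh/2)^2 + 2*(Np/σl)*(σh/2))*x := by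
          have h2 : t^2 ≤ (σh/2)^2*x^2 := by
            calc t^2 ≤ ((σh/2)*x)^2 := pow_le_pow_left₀ ht0 htx 2
              _ = (σh/2)^2*x^2 := by ring
          have h2' : t^2 ≤ (σh/2)^2*x := by
            have h := mul_le_mul_of_nonneg_left hxx (sq_nonneg (σh/2))
            linarith only [h, h2]
          have h3 : (Np/σl)*t ≤ (Np/σl)*((σh/2)*x) := mul_le_mul_of_nonneg_left htx hqabs
          linarith only [h2', h3]
  have hy2 : |y| ≤ 1/2 := le_trans hyb hxCy
  have hMpos : 0 < mFun κ ξ ρ u x := by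
    rw [hM_eq]
    have h := abs_le.1 hy2
    linarith only [h.1]
  have hslt : sFun κ ξ ρ u x < Real.pi := by
    rw [hs_eq]
    have h1 := ht1
    rw [htdef] at h1
    linarith only [h1, Real.pi_gt_three]
  -- the exact identity
  set L3 := Real.log (mFun κ ξ ρ u x) - y + y^2/2 with hL3def
  clear_value L3
  have hymp : y - pFun κ ξ ρ u x/2 = -(t^2)/2 + rc + q*rs := by
    rw [hydef, hrcdef, hrsdef, hp_eq]
    linear_combination (x/2)*hqσ + q*htdef
  have e1 : pFun κ ξ ρ u x - 2*y + y^2 - ξ^2*u^2/4*x^2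
      = -2*rc - 2*(q*rs) + (y - pFun κ ξ ρ u x/2)*(y + pFun κ ξ ρ u x/2)
        + (t^2 + (pFun κ ξ ρ u x)^2/4 - ξ^2*u^2/4*x^2) := by
    linear_combination (-2)*hymp
  have e2 : t^2 + (pFun κ ξ ρ u x)^2/4 - ξ^2*u^2/4*x^2 = -(ξ^2*u/4)*x^3 := by
    rw [hp_eq, htdef]
    linear_combination (x^2/4) * hσ2'
  have hlM : Real.log (mFun κ ξ ρ u x) = L3 + y - y^2/2 := by rw [hL3def]; ring
  have hstep : pFun κ ξ ρ u x - 2*Real.log (mFun κ ξ ρ u x) - ξ^2*u^2/4*x^2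
      = -(ξ^2*u/4)*x^3 + (-2*rc) + (-2*(q*rs))
        + ((y - pFun κ ξ ρ u x/2)*(y + pFun κ ξ ρ u x/2)) + (-2*L3) := by
    rw [hlM]
    linear_combination e1 + e2
  -- bounds on the pieces
  have htx3 : t^3 ≤ (σh/2)^3*x^3 := by
    calc t^3 ≤ ((σh/2)*x)^3 := pow_le_pow_left₀ ht0 htx 3
      _ = (σh/2)^3*x^3 := by ring
  have hrcb : |rc| ≤ (σh/2)^3*x^3 := le_trans hrc htx3
  have hrsb : |q*rs| ≤ (Np/σl)*((σh/2)^3*x^3) := by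
    rw [abs_mul]
    exact mul_le_mul hqb (le_trans hrs htx3) (abs_nonneg _) hqabs
  have hpb : |pFun κ ξ ρ u x| ≤ Np*x := by
    rw [hp_eq, abs_mul, abs_of_pos hx]
    have h := mul_le_mul_of_nonneg_left hNpb hx.le
    linarith only [h]
  have hymp_b : |y - pFun κ ξ ρ u x/2|
      ≤ ((σh/2)^2/2 + (σh/2)^3 + (Np/σl)*(σh/2)^3)*x^2 := by
    rw [hymp]
    have h3x2 : (σh/2)^3*x^3 ≤ (σh/2)^3*x^2 :=
      mul_le_mul_of_nonneg_left hx32 (by positivity)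
    have h2 : t^2 ≤ (σh/2)^2*x^2 := by
      calc t^2 ≤ ((σh/2)*x)^2 := pow_le_pow_left₀ ht0 htx 2
        _ = (σh/2)^2*x^2 := by ring
    calc |-(t^2)/2 + rc + q*rs| ≤ |-(t^2)/2 + rc| + |q*rs| := abs_add_le _ _
      _ ≤ |-(t^2)/2| + |rc| + |q*rs| := by gcongr; exact abs_add_le _ _
      _ ≤ t^2/2 + (σh/2)^3*x^2 + (Np/σl)*((σh/2)^3*x^2) := by
          gcongr
          · rw [show (-(t^2)/2 : ℝ) = -(t^2/2) by ring, abs_neg,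
              abs_of_nonneg (by positivity : (0:ℝ) ≤ t^2/2)]
          · exact le_trans hrcb h3x2
          · exact le_trans hrsb (mul_le_mul_of_nonneg_left h3x2 hqabs)
      _ ≤ ((σh/2)^2/2 + (σh/2)^3 + (Np/σl)*(σh/2)^3)*x^2 := by
          linarith only [h2]
  have hyp2_b : |y + pFun κ ξ ρ u x/2|
      ≤ ((σh/2)^2 + 2*(Np/σl)*(σh/2) + Np/2)*x := by
    calc |y + pFun κ ξ ρ u x/2| ≤ |y| + |pFun κ ξ ρ u x/2| := abs_add_le _ _
      _ ≤ ((σh/2)^2 + 2*(Np/σl)*(σh/2))*x + Np*x/2 := by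
          refine add_le_add hyb ?_
          rw [abs_div, abs_of_nonneg (by norm_num : (0:ℝ) ≤ 2)]
          linarith only [hpb]
      _ = ((σh/2)^2 + 2*(Np/σl)*(σh/2) + Np/2)*x := by ring
  have hL3b : |L3| ≤ 2*(((σh/2)^2 + 2*(Np/σl)*(σh/2))*x)^3 := by
    have hlt : |(-y)| < 1 := by rw [abs_neg]; linarith only [hy2]
    have hlemma := Real.abs_log_sub_add_sum_range_le hlt 2
    simp only [Finset.sum_range_succ, Finset.sum_range_zero] at hlemma
    norm_num at hlemma
    have h1 : |L3| ≤ |y|^3/(1 - |y|) := by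
      rw [hL3def, hM_eq]
      refine le_trans (le_of_eq ?_) hlemma
      congr 1
      ring
    have h2 : |y|^3/(1 - |y|) ≤ 2*|y|^3 := by
      rw [div_le_iff₀ (by linarith only [hy2, abs_nonneg y])]
      have h := mul_nonneg (pow_nonneg (abs_nonneg y) 3)
        (by linarith only [hy2] : (0:ℝ) ≤ 1 - 2*|y|)
      linarith only [h]
    have h3 : |y|^3 ≤ (((σh/2)^2 + 2*(Np/σl)*(σh/2))*x)^3 :=
      pow_le_pow_left₀ (abs_nonneg y) hyb 3
    linarith only [h1, h2, h3]
  -- assemble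
  have hbound : |pFun κ ξ ρ u x - 2*Real.log (mFun κ ξ ρ u x) - ξ^2*u^2/4*x^2|
      ≤ (|ξ^2*u/4| + 2*(σh/2)^3 + 2*(Np/σl)*(σh/2)^3
          + ((σh/2)^2/2 + (σh/2)^3 + (Np/σl)*(σh/2)^3)
              * ((σh/2)^2 + 2*(Np/σl)*(σh/2) + Np/2)
          + 4*((σh/2)^2 + 2*(Np/σl)*(σh/2))^3) * x^3 := by
    rw [hstep]
    have T : ∀ a b c d e : ℝ, |a + b + c + d + e| ≤ |a| + |b| + |c| + |d| + |e| := by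
      intro a b c d e
      calc |a + b + c + d + e| ≤ |a + b + c + d| + |e| := abs_add_le _ _
        _ ≤ |a + b + c| + |d| + |e| := by gcongr; exact abs_add_le _ _
        _ ≤ |a + b| + |c| + |d| + |e| := by gcongr; exact abs_add_le _ _
        _ ≤ |a| + |b| + |c| + |d| + |e| := by gcongr; exact abs_add_le _ _
    refine le_trans (T _ _ _ _ _) ?_
    have t1 : |(-(ξ^2*u/4)*x^3)| = |ξ^2*u/4| * x^3 := by
      rw [abs_mul, abs_neg, abs_of_pos (pow_pos hx 3)]
    have t2 : |(-2*rc)| ≤ 2*((σh/2)^3*x^3) := by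
      rw [show (-2*rc) = -(2*rc) by ring, abs_neg, abs_mul,
        abs_of_nonneg (by norm_num : (0:ℝ) ≤ 2)]
      linarith only [hrcb]
    have t3 : |(-2*(q*rs))| ≤ 2*((Np/σl)*((σh/2)^3*x^3)) := by
      rw [show (-2*(q*rs)) = -(2*(q*rs)) by ring, abs_neg, abs_mul,
        abs_of_nonneg (by norm_num : (0:ℝ) ≤ 2)]
      linarith only [hrsb]
    have t4 : |(y - pFun κ ξ ρ u x/2)*(y + pFun κ ξ ρ u x/2)|
        ≤ (((σh/2)^2/2 + (σh/2)^3 + (Np/σl)*(σh/2)^3)*x^2)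
          * (((σh/2)^2 + 2*(Np/σl)*(σh/2) + Np/2)*x) := by
      rw [abs_mul]
      exact mul_le_mul hymp_b hyp2_b (abs_nonneg _) (by positivity)
    have t5 : |(-2*L3)| ≤ 4*(((σh/2)^2 + 2*(Np/σl)*(σh/2))*x)^3 := by
      rw [show (-2*L3) = -(2*L3) by ring, abs_neg, abs_mul,
        abs_of_nonneg (by norm_num : (0:ℝ) ≤ 2)]
      linarith only [hL3b]
    linarith only [t1, t2, t3, t4, t5]
  -- finish: rewrite hestA and conclude
  rw [hestA_eq κ θ ξ ρ u hx hsg hslt hMpos, ← Complex.ofReal_sub]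
  rw [Complex.norm_real, Real.norm_eq_abs]
  have hfac : κ*θ/ξ^2*(pFun κ ξ ρ u x - 2*Real.log (mFun κ ξ ρ u x)) - u^2*κ*θ*x^2/4
      = (κ*θ/ξ^2) * ((pFun κ ξ ρ u x - 2*Real.log (mFun κ ξ ρ u x)) - ξ^2*u^2/4*x^2) := by
    field_simp
  rw [hfac, abs_mul, abs_of_nonneg hκθ, mul_assoc]
  exact mul_le_mul_of_nonneg_left hbound hκθ

lemma mainX (κ θ ξ ρ u : ℝ) (hκ : 0 < κ) (hθ : 0 < θ) (hξ : 0 < ξ)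
    (hρ2 : ρ^2 < 1) (hu : u ≠ 0) :
    (fun x : ℝ => hestA κ θ ρ ξ ((u:ℂ)/(x:ℂ)) (x^2) - ((u^2*κ*θ*x^2/4 : ℝ):ℂ))
      =O[𝓝[>] (0:ℝ)] (fun x : ℝ => x^3) := by
  have hu2 : 0 < u^2 := by positivity
  have ha2 : 0 < (1-ρ^2)*ξ^2*u^2 := by
    have h1 : 0 < 1 - ρ^2 := by linarith
    positivity
  obtain ⟨a2, ha2def⟩ : ∃ a2, a2 = (1-ρ^2)*ξ^2*u^2 := ⟨_, rfl⟩
  rw [← ha2def] at ha2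
  obtain ⟨σh, hσhdef⟩ : ∃ v, v = Real.sqrt (2*a2) := ⟨_, rfl⟩
  have hσh : 0 < σh := by rw [hσhdef]; exact Real.sqrt_pos.2 (by linarith)
  obtain ⟨σl, hσldef⟩ : ∃ v, v = Real.sqrt (a2/2) := ⟨_, rfl⟩
  have hσl : 0 < σl := by rw [hσldef]; exact Real.sqrt_pos.2 (by linarith)
  obtain ⟨Np, hNpdef⟩ : ∃ v, v = |κ| + |ρ*ξ*u| := ⟨_, rfl⟩
  have hNp : 0 ≤ Np := by rw [hNpdef]; positivity
  obtain ⟨Cy, hCydef⟩ : ∃ v, v = (σh/2)^2 + 2*(Np/σl)*(σh/2) := ⟨_, rfl⟩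
  have hCy : 0 ≤ Cy := by rw [hCydef]; positivity
  obtain ⟨δ0, hδ0def⟩ : ∃ v, v = min 1 (min (1/(σh+1)) (1/(2*Cy+1))) := ⟨_, rfl⟩
  have hδ0 : 0 < δ0 := by
    rw [hδ0def]
    apply lt_min (by norm_num)
    exact lt_min (by positivity) (by positivity)
  have hsg0 : sgFun κ ξ ρ u 0 = a2 := by simp [sgFun, ha2def]
  have hcont : ContinuousAt (sgFun κ ξ ρ u) 0 := by
    unfold sgFun; fun_prop
  have hev1 : ∀ᶠ x in 𝓝[>] (0:ℝ), sgFun κ ξ ρ u x ∈ Set.Ioo (a2/2) (2*a2) := by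
    apply eventually_nhdsWithin_of_eventually_nhds
    have hmem : Set.Ioo (a2/2) (2*a2) ∈ 𝓝 (sgFun κ ξ ρ u 0) := by
      rw [hsg0]; exact Ioo_mem_nhds (by linarith) (by linarith)
    exact hcont.eventually_mem hmem
  have hev2 : ∀ᶠ x in 𝓝[>] (0:ℝ), x < δ0 := by
    apply eventually_nhdsWithin_of_eventually_nhds
    exact tendsto_id.eventually_lt_const hδ0
  have hev3 : ∀ᶠ x in 𝓝[>] (0:ℝ), (0:ℝ) < x := eventually_mem_nhdsWithin
  rw [isBigO_iff]
  refine ⟨(κ*θ/ξ^2) * (|ξ^2*u/4| + 2*(σh/2)^3 + 2*(Np/σl)*(σh/2)^3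
      + ((σh/2)^2/2 + (σh/2)^3 + (Np/σl)*(σh/2)^3)
          * ((σh/2)^2 + 2*(Np/σl)*(σh/2) + Np/2)
      + 4*((σh/2)^2 + 2*(Np/σl)*(σh/2))^3), ?_⟩
  filter_upwards [hev1, hev2, hev3] with x hsgIoo hxδ hx
  obtain ⟨hsgl, hsgu⟩ := hsgIoo
  have hsg : 0 < sgFun κ ξ ρ u x := lt_trans (by linarith) hsgl
  have hσh' : Real.sqrt (sgFun κ ξ ρ u x) ≤ σh := by
    rw [hσhdef]; exact Real.sqrt_le_sqrt hsgu.le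
  have hσl' : σl ≤ Real.sqrt (sgFun κ ξ ρ u x) := by
    rw [hσldef]; exact Real.sqrt_le_sqrt hsgl.le
  have hx1 : x ≤ 1 := le_trans hxδ.le (by rw [hδ0def]; exact min_le_left _ _)
  have hxσ : σh*x ≤ 1 := by
    have h1 : x ≤ 1/(σh+1) := le_trans hxδ.le
      (by rw [hδ0def]; exact le_trans (min_le_right _ _) (min_le_left _ _))
    have h2 : x*(σh+1) ≤ 1 := (le_div_iff₀ (by positivity)).1 h1
    nlinarith [hx, hσh]
  have hxCy : ((σh/2)^2 + 2*(Np/σl)*(σh/2)) * x ≤ 1/2 := by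
    have h1 : x ≤ 1/(2*Cy+1) := le_trans hxδ.le
      (by rw [hδ0def]; exact le_trans (min_le_right _ _) (min_le_right _ _))
    have h2 : x*(2*Cy+1) ≤ 1 := (le_div_iff₀ (by positivity)).1 h1
    rw [← hCydef]
    nlinarith [hx, hCy]
  have hNpb : |κ*x - ρ*ξ*u| ≤ Np := by
    rw [hNpdef]
    calc |κ*x - ρ*ξ*u| ≤ |κ*x| + |ρ*ξ*u| := abs_sub _ _
      _ ≤ |κ| + |ρ*ξ*u| := by
          rw [abs_mul, abs_of_pos hx]
          have h := mul_le_mul_of_nonneg_left hx1 (abs_nonneg κ)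
          linarith only [h]
  have hb := pointBound κ θ ξ ρ u x σh σl Np (by positivity) hξ.ne' hx hx1 hsg
    hσh' hσl hσl' hxσ hNp hNpb hxCy
  calc ‖hestA κ θ ρ ξ ((u:ℂ)/(x:ℂ)) (x^2) - ((u^2*κ*θ*x^2/4 : ℝ):ℂ)‖
      ≤ (κ*θ/ξ^2) * (|ξ^2*u/4| + 2*(σh/2)^3 + 2*(Np/σl)*(σh/2)^3
          + ((σh/2)^2/2 + (σh/2)^3 + (Np/σl)*(σh/2)^3)
              * ((σh/2)^2 + 2*(Np/σl)*(σh/2) + Np/2)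
          + 4*((σh/2)^2 + 2*(Np/σl)*(σh/2))^3) * (x^3) := hb
    _ = (κ*θ/ξ^2) * (|ξ^2*u/4| + 2*(σh/2)^3 + 2*(Np/σl)*(σh/2)^3
          + ((σh/2)^2/2 + (σh/2)^3 + (Np/σl)*(σh/2)^3)
              * ((σh/2)^2 + 2*(Np/σl)*(σh/2) + Np/2)
          + 4*((σh/2)^2 + 2*(Np/σl)*(σh/2))^3) * ‖x^3‖ := by
        rw [Real.norm_eq_abs, abs_of_pos (pow_pos hx 3)]

lemma hestA_zero (κ θ ξ ρ : ℝ) (hκ : 0 < κ) (τ : ℝ) :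
    hestA κ θ ρ ξ 0 τ = 0 := by
  have hD0 : hestD κ ρ ξ 0 = (κ:ℂ) := by
    rw [hestD]
    rw [show ((κ:ℂ) - (ρ:ℂ)*(ξ:ℂ)*0)^2 + 0*(1-0)*(ξ:ℂ)^2 = ((κ^2 : ℝ):ℂ) by push_cast; ring]
    have h3 := Complex.ofReal_cpow (x := κ^2) (sq_nonneg κ) (1/2 : ℝ)
    rw [← Real.sqrt_eq_rpow, Real.sqrt_sq hκ.le] at h3
    push_cast at h3
    rw [show ((κ^2:ℝ):ℂ) = (κ:ℂ)^2 by push_cast; ring]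
    exact h3.symm
  have hγ0 : hestGamma κ ρ ξ 0 = 0 := by
    rw [hestGamma, hD0]
    simp
  rw [hestA, hγ0, hD0]
  simp


theorem stmt10 (κ θ ξ v ρ t : ℝ) (hκ : 0 < κ) (hθ : 0 < θ) (hξ : 0 < ξ)
    (hv : 0 < v) (hρ : ρ ∈ Set.Ioo (-1 : ℝ) 1) (ht : 0 < t)
    (u : ℝ) (hu : |u| < 1 / Real.sqrt (betaT κ ξ t)) :
    (fun τ : ℝ => hestA κ θ ρ ξ ((u : ℂ) / ((Real.sqrt τ : ℝ) : ℂ)) τ -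
        ((u ^ 2 * κ * θ * τ / 4 : ℝ) : ℂ))
      =O[𝓝[>] (0 : ℝ)] fun τ : ℝ => τ ^ ((3 : ℝ) / 2) := by
  rcases eq_or_ne u 0 with rfl | hu
  · have hzero : (fun τ : ℝ => hestA κ θ ρ ξ (((0:ℝ) : ℂ) / ((Real.sqrt τ : ℝ) : ℂ)) τ -
        (((0:ℝ) ^ 2 * κ * θ * τ / 4 : ℝ) : ℂ)) = fun _ => (0:ℂ) := by
      funext τ
      simp [hestA_zero κ θ ξ ρ hκ]
    rw [hzero]
    exact isBigO_zero _ _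
  · have hρ2 : ρ^2 < 1 := by nlinarith [hρ.1, hρ.2]
    have hmain := mainX κ θ ξ ρ u hκ hθ hξ hρ2 hu
    have hφ : Tendsto Real.sqrt (𝓝[>] (0:ℝ)) (𝓝[>] (0:ℝ)) := by
      rw [tendsto_nhdsWithin_iff]
      constructor
      · have h := (Real.continuous_sqrt.tendsto 0).mono_left (nhdsWithin_le_nhds (s := Set.Ioi 0))
        simpa using h
      · filter_upwards [eventually_mem_nhdsWithin] with τ hτ
        exact Set.mem_Ioi.2 (Real.sqrt_pos.2 hτ)
    have hcomp := hmain.comp_tendsto hφ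
    refine hcomp.congr' ?_ ?_
    · filter_upwards [eventually_mem_nhdsWithin] with τ hτ
      have h2 : Real.sqrt τ ^ 2 = τ := Real.sq_sqrt (le_of_lt hτ)
      simp only [Function.comp_apply, h2]
    · filter_upwards [eventually_mem_nhdsWithin] with τ hτ
      have hτ0 : (0:ℝ) ≤ τ := le_of_lt hτ
      show Real.sqrt τ ^ 3 = τ ^ ((3:ℝ)/2)
      rw [Real.sqrt_eq_rpow, ← Real.rpow_natCast (τ ^ ((1:ℝ)/2)) 3, ← Real.rpow_mul hτ0]
      norm_num

end
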